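/- Let f₁, f₂ be Laurent polynomials in two variables and η ∈ ℤ². For a Laurent polynomial g with support A, let g^η denote the sum of terms of g whose exponent a minimizes ⟨η,a⟩ over A (the initial form). Then the initial form of the toric Jacobian satisfies (J^T_{f₁,f₂})^η = J^T_{f₁^η, f₂^η}, provided J^T_{f₁^η,f₂^η} ≠ 0, where J^T denotes the toric Jacobian x₁x₂·det(∂f_i/∂x_j). -/

import Mathlib

open Finsupp

/-- A Laurent polynomial in two variables over `K`. -/
abbrev LaurentPoly2 (K : Type*) [CommRing K] := AddMonoidAlgebra K (Fin 2 → ℤ)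

/-- The operator `x_i ∂/∂x_i` on Laurent polynomials. -/
noncomputable def xd {K : Type*} [CommRing K] (i : Fin 2)
    (f : LaurentPoly2 K) : LaurentPoly2 K :=
  AddMonoidAlgebra.ofCoeff (f.coeff.sum fun a c => Finsupp.single a ((a i : ℤ) • c))

/-- The toric Jacobian `x₁x₂·det(∂f_i/∂x_j)` of two bivariate Laurent polynomials. -/
noncomputable def toricJacobian {K : Type*} [CommRing K] (f₁ f₂ : LaurentPoly2 K) :
    LaurentPoly2 K :=
  xd 0 f₁ * xd 1 f₂ - xd 1 f₁ * xd 0 f₂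

/-- The initial form `g^η` of a Laurent polynomial `g` with respect to `η`: the subsum
of terms whose exponent minimizes `⟨η,·⟩` over the support of `g`. -/
noncomputable def initialForm {K : Type*} [CommRing K] (η : Fin 2 → ℤ)
    (g : LaurentPoly2 K) : LaurentPoly2 K :=
  AddMonoidAlgebra.ofCoeff (∑ a ∈ g.coeff.support.filter
      (fun a => ∀ b ∈ g.coeff.support, (∑ i, η i * a i) ≤ (∑ i, η i * b i)),
    Finsupp.single a (g.coeff a))

section Aux
variable {K : Type*} [CommRing K]

def wt (η a : Fin 2 → ℤ) : ℤ := ∑ i, η i * a i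

lemma wt_add (η a b : Fin 2 → ℤ) : wt η (a + b) = wt η a + wt η b := by
  simp [wt, mul_add, Finset.sum_add_distrib]

lemma xd_apply (i : Fin 2) (f : LaurentPoly2 K) (c : Fin 2 → ℤ) :
    (xd i f).coeff c = (c i : ℤ) • f.coeff c := by
  classical
  rw [xd, AddMonoidAlgebra.coeff_ofCoeff, Finsupp.sum_apply]
  rw [Finsupp.sum]
  rw [Finset.sum_eq_single c]
  · simp
  · intro b _ hb; simp [Finsupp.single_apply, hb]
  · intro hc; simp [Finsupp.notMem_support_iff.mp hc]

lemma support_xd (i : Fin 2) (f : LaurentPoly2 K) : (xd i f).coeff.support ⊆ f.coeff.support := by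
  intro a ha
  simp only [Finsupp.mem_support_iff, xd_apply] at ha ⊢
  intro h; simp [h] at ha

lemma xd_add (i : Fin 2) (f g : LaurentPoly2 K) : xd i (f + g) = xd i f + xd i g := by
  ext c
  rw [AddMonoidAlgebra.coeff_add, Finsupp.add_apply, xd_apply, xd_apply, xd_apply, AddMonoidAlgebra.coeff_add, Finsupp.add_apply, smul_add]

lemma initialForm_apply (η : Fin 2 → ℤ) (g : LaurentPoly2 K) (c : Fin 2 → ℤ) :
    (initialForm η g).coeff c = if (∀ b ∈ g.coeff.support, wt η c ≤ wt η b) then g.coeff c else 0 := by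
  classical
  rw [initialForm, AddMonoidAlgebra.coeff_ofCoeff, Finset.sum_apply']
  simp only [Finsupp.single_apply]
  rw [Finset.sum_ite_eq' ]
  by_cases hc : c ∈ g.coeff.support
  · simp [hc, wt]
  · simp [Finsupp.notMem_support_iff.mp hc, hc]

lemma mem_support_initialForm (η : Fin 2 → ℤ) (g : LaurentPoly2 K) (c : Fin 2 → ℤ) :
    c ∈ (initialForm η g).coeff.support ↔
      c ∈ g.coeff.support ∧ ∀ b ∈ g.coeff.support, wt η c ≤ wt η b := by
  classical
  simp only [Finsupp.mem_support_iff, initialForm_apply]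
  by_cases hp : ∀ b ∈ g.coeff.support, wt η c ≤ wt η b <;> simp [hp] <;> tauto

open Pointwise in
lemma mem_support_toricJacobian {f g : LaurentPoly2 K} {a : Fin 2 → ℤ}
    (ha : a ∈ (toricJacobian f g).coeff.support) :
    ∃ b ∈ f.coeff.support, ∃ c ∈ g.coeff.support, a = b + c := by
  rw [toricJacobian, AddMonoidAlgebra.coeff_sub] at ha
  have h1 := Finsupp.support_sub ha
  have h2 : a ∈ f.coeff.support + g.coeff.support := by
    rcases Finset.mem_union.mp h1 with h | h
    · exact Finset.add_subset_add (support_xd 0 f) (support_xd 1 g)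
        (AddMonoidAlgebra.support_coeff_mul_subset _ _ h)
    · exact Finset.add_subset_add (support_xd 1 f) (support_xd 0 g)
        (AddMonoidAlgebra.support_coeff_mul_subset _ _ h)
  rcases Finset.mem_add.mp h2 with ⟨b, hb, c, hc, hbc⟩
  exact ⟨b, hb, c, hc, hbc.symm⟩

lemma toricJacobian_bilin (a b c d : LaurentPoly2 K) :
    toricJacobian (a + b) (c + d) = toricJacobian a c + toricJacobian a d
      + toricJacobian b c + toricJacobian b d := by
  simp only [toricJacobian, xd_add]; ring

lemma xd_zero (i : Fin 2) : xd i (0 : LaurentPoly2 K) = 0 := by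
  simp [xd, Finsupp.sum_zero_index]

lemma toricJacobian_zero_left (g : LaurentPoly2 K) : toricJacobian 0 g = 0 := by
  simp [toricJacobian, xd_zero]

lemma toricJacobian_zero_right (g : LaurentPoly2 K) : toricJacobian g 0 = 0 := by
  simp [toricJacobian, xd_zero]


end Aux

/-- Taking initial forms commutes with the toric Jacobian, provided the toric Jacobian
of the initial forms is nonzero: `(J^T_{f₁,f₂})^η = J^T_{f₁^η, f₂^η}`. -/
theorem initialForm_toricJacobian {K : Type*} [CommRing K]
    (f₁ f₂ : LaurentPoly2 K) (η : Fin 2 → ℤ)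
    (h : toricJacobian (initialForm η f₁) (initialForm η f₂) ≠ 0) :
    initialForm η (toricJacobian f₁ f₂)
      = toricJacobian (initialForm η f₁) (initialForm η f₂) := by

  classical
  set p₁ := initialForm η f₁ with hp₁
  set p₂ := initialForm η f₂ with hp₂
  -- p₁, p₂ nonzero
  have hp₁ne : p₁ ≠ 0 := fun h0 => h (h0 ▸ toricJacobian_zero_left p₂)
  have hp₂ne : p₂ ≠ 0 := fun h0 => h (h0 ▸ toricJacobian_zero_right p₁)
  obtain ⟨a₁, ha₁⟩ := Finsupp.support_nonempty_iff.mpr (mt AddMonoidAlgebra.coeff_eq_zero.mp hp₁ne)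
  obtain ⟨a₂, ha₂⟩ := Finsupp.support_nonempty_iff.mpr (mt AddMonoidAlgebra.coeff_eq_zero.mp hp₂ne)
  set ν₁ := wt η a₁ with hν₁
  set ν₂ := wt η a₂ with hν₂
  obtain ⟨ha₁f, ha₁min⟩ := (mem_support_initialForm η f₁ a₁).mp ha₁
  obtain ⟨ha₂f, ha₂min⟩ := (mem_support_initialForm η f₂ a₂).mp ha₂
  -- exact weights on supports of p₁, p₂
  have hwp₁ : ∀ c ∈ p₁.coeff.support, wt η c = ν₁ := by
    intro c hc
    obtain ⟨hcf, hcmin⟩ := (mem_support_initialForm η f₁ c).mp hc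
    exact le_antisymm (hcmin a₁ ha₁f) (ha₁min c hcf)
  have hwp₂ : ∀ c ∈ p₂.coeff.support, wt η c = ν₂ := by
    intro c hc
    obtain ⟨hcf, hcmin⟩ := (mem_support_initialForm η f₂ c).mp hc
    exact le_antisymm (hcmin a₂ ha₂f) (ha₂min c hcf)
  -- remainders
  set r₁ := f₁ - p₁ with hr₁
  set r₂ := f₂ - p₂ with hr₂
  have hwr₁ : ∀ c ∈ r₁.coeff.support, ν₁ < wt η c := by
    intro c hc
    rw [Finsupp.mem_support_iff, hr₁, AddMonoidAlgebra.coeff_sub, Finsupp.sub_apply, hp₁, initialForm_apply] at hc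
    by_cases hp : ∀ b ∈ f₁.coeff.support, wt η c ≤ wt η b
    · rw [if_pos hp] at hc
      simp at hc
    · push_neg at hp
      obtain ⟨b, hbf, hbc⟩ := hp
      exact lt_of_le_of_lt (ha₁min b hbf) hbc
  have hwr₂ : ∀ c ∈ r₂.coeff.support, ν₂ < wt η c := by
    intro c hc
    rw [Finsupp.mem_support_iff, hr₂, AddMonoidAlgebra.coeff_sub, Finsupp.sub_apply, hp₂, initialForm_apply] at hc
    by_cases hp : ∀ b ∈ f₂.coeff.support, wt η c ≤ wt η b
    · rw [if_pos hp] at hc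
      simp at hc
    · push_neg at hp
      obtain ⟨b, hbf, hbc⟩ := hp
      exact lt_of_le_of_lt (ha₂min b hbf) hbc
  -- decomposition of the Jacobian
  set Jp := toricJacobian p₁ p₂ with hJp
  set R := toricJacobian p₁ r₂ + toricJacobian r₁ p₂ + toricJacobian r₁ r₂ with hR
  have hdec : toricJacobian f₁ f₂ = Jp + R := by
    have h1 : f₁ = p₁ + r₁ := by rw [hr₁]; ring
    have h2 : f₂ = p₂ + r₂ := by rw [hr₂]; ring
    rw [h1, h2, toricJacobian_bilin, hJp, hR]; ring
  -- weights on supports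
  have hwJp : ∀ a ∈ Jp.coeff.support, wt η a = ν₁ + ν₂ := by
    intro a ha
    obtain ⟨b, hb, c, hc, rfl⟩ := mem_support_toricJacobian ha
    rw [wt_add, hwp₁ b hb, hwp₂ c hc]
  have hwR : ∀ a ∈ R.coeff.support, ν₁ + ν₂ < wt η a := by
    intro a ha
    rw [hR, AddMonoidAlgebra.coeff_add, AddMonoidAlgebra.coeff_add] at ha
    have key : ∀ (u v : LaurentPoly2 K) (m₁ m₂ : ℤ),
        (∀ b ∈ u.coeff.support, m₁ ≤ wt η b) → (∀ b ∈ v.coeff.support, m₂ ≤ wt η b) →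
        a ∈ (toricJacobian u v).coeff.support → m₁ + m₂ ≤ wt η a := by
      intro u v m₁ m₂ hu hv haa
      obtain ⟨b, hb, c, hc, rfl⟩ := mem_support_toricJacobian haa
      rw [wt_add]
      exact add_le_add (hu b hb) (hv c hc)
    rcases Finset.mem_union.mp (Finsupp.support_add ha) with h' | h'
    · rcases Finset.mem_union.mp (Finsupp.support_add h') with h'' | h''
      · have := key p₁ r₂ ν₁ (ν₂ + 1)
          (fun b hb => (hwp₁ b hb).ge) (fun b hb => hwr₂ b hb) h''
        omega
      · have := key r₁ p₂ (ν₁ + 1) ν₂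
          (fun b hb => hwr₁ b hb) (fun b hb => (hwp₂ b hb).ge) h''
        omega
    · have := key r₁ r₂ (ν₁ + 1) (ν₂ + 1)
        (fun b hb => hwr₁ b hb) (fun b hb => hwr₂ b hb) h'
      omega
  -- a₀ : a point of minimal weight in the support of the full Jacobian
  obtain ⟨a₀, ha₀⟩ := Finsupp.support_nonempty_iff.mpr (mt AddMonoidAlgebra.coeff_eq_zero.mp h)
  have hwa₀ : wt η a₀ = ν₁ + ν₂ := hwJp a₀ ha₀
  have hRa₀ : R.coeff a₀ = 0 := by
    by_contra hne
    have := hwR a₀ (Finsupp.mem_support_iff.mpr hne)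
    omega
  have hJa₀ : (toricJacobian f₁ f₂).coeff a₀ = Jp.coeff a₀ := by
    rw [hdec, AddMonoidAlgebra.coeff_add, Finsupp.add_apply, hRa₀, add_zero]
  have ha₀J : a₀ ∈ (toricJacobian f₁ f₂).coeff.support := by
    rw [Finsupp.mem_support_iff, hJa₀]
    exact Finsupp.mem_support_iff.mp ha₀
  have hwJ : ∀ a ∈ (toricJacobian f₁ f₂).coeff.support, ν₁ + ν₂ ≤ wt η a := by
    intro a ha
    rw [hdec, AddMonoidAlgebra.coeff_add] at ha
    rcases Finset.mem_union.mp (Finsupp.support_add ha) with h' | h'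
    · exact (hwJp a h').ge
    · exact (hwR a h').le
  -- conclude coefficientwise
  ext c
  rw [initialForm_apply]
  by_cases hwc : wt η c ≤ ν₁ + ν₂
  · rw [if_pos (fun b hb => le_trans hwc (hwJ b hb))]
    have hRc : R.coeff c = 0 := by
      by_contra hne
      have := hwR c (Finsupp.mem_support_iff.mpr hne)
      omega
    rw [hdec, AddMonoidAlgebra.coeff_add, Finsupp.add_apply, hRc, add_zero]
  · rw [if_neg (fun hall => hwc (hwa₀ ▸ hall a₀ ha₀J))]
    by_contra hne
    have hc : c ∈ Jp.coeff.support := Finsupp.mem_support_iff.mpr (fun h0 => hne h0.symm)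
    have := hwJp c hc
    omega
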